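/- arXiv:2504.12910 — 4 statements merged into one kernel-verified Lean document; each statement's English description precedes it below -/
import Mathlib

section
/- Let k be an algebraically closed field of characteristic p > 0, let n ≥ 1 and 1 ≤ q ≤ n, and let e ≥ q be an integer with e ≤ q·p. If ω is a homogeneous polynomial q-form of degree e on affine (n+1)-space over k which is projective and closed, then ω is exact. -/
open MvPolynomial

/-- An alternating family of polynomial coefficients, i.e. a homogeneous polynomial
`q`-form on affine `N`-space: antisymmetric under permutations of the indices and
vanishing when two indices coincide. -/
def IsAltFamily {k : Type*} [CommRing k] {N q : ℕ}
    (b : (Fin q → Fin N) → MvPolynomial (Fin N) k) : Prop :=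
  (∀ (σ : Equiv.Perm (Fin q)) (i : Fin q → Fin N),
      b (i ∘ σ) = (Equiv.Perm.sign σ : ℤ) • b i) ∧
  ∀ i : Fin q → Fin N, ¬ Function.Injective i → b i = 0

/-- The exterior derivative of a polynomial `q`-form, as a `(q+1)`-form. -/
noncomputable def extD {k : Type*} [CommRing k] {N q : ℕ}
    (b : (Fin q → Fin N) → MvPolynomial (Fin N) k)
    (j : Fin (q + 1) → Fin N) : MvPolynomial (Fin N) k :=
  ∑ t : Fin (q + 1),
    (-1 : MvPolynomial (Fin N) k) ^ (t : ℕ) * pderiv (j t) (b (j ∘ t.succAbove))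

/-- A `q`-form (with `q = m+1`) is projective if its contraction with the radial
vector field `R = Σ x_l ∂/∂x_l` vanishes. -/
def IsProjectiveForm {k : Type*} [CommRing k] {N m : ℕ}
    (b : (Fin (m + 1) → Fin N) → MvPolynomial (Fin N) k) : Prop :=
  ∀ i : Fin m → Fin N, ∑ l : Fin N, X l * b (Fin.cons l i) = 0

/-- Plücker conditions: local decomposability of a `q`-form (`q = m+1`). -/
def IsLocDecForm {k : Type*} [CommRing k] {N m : ℕ}
    (b : (Fin (m + 1) → Fin N) → MvPolynomial (Fin N) k) : Prop :=
  ∀ (i : Fin m → Fin N) (j : Fin (m + 2) → Fin N),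
    ∑ t : Fin (m + 2), (-1 : MvPolynomial (Fin N) k) ^ (t : ℕ) *
      (b (Fin.snoc i (j t)) * b (j ∘ t.succAbove)) = 0

/-- Integrability of a `q`-form (`q = m+1`): local decomposability together with the
Frobenius-type conditions involving the exterior derivative. -/
def IsIntegrableForm {k : Type*} [CommRing k] {N m : ℕ}
    (b : (Fin (m + 1) → Fin N) → MvPolynomial (Fin N) k) : Prop :=
  IsLocDecForm b ∧
  ∀ (i : Fin m → Fin N) (j : Fin (m + 3) → Fin N),
    ∑ t : Fin (m + 3), (-1 : MvPolynomial (Fin N) k) ^ (t : ℕ) *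
      (b (Fin.snoc i (j t)) * extD b (j ∘ t.succAbove)) = 0

/-- The linear form `ℓ_λ = Σ λ_v x_v` associated with a covector `λ ∈ k^N`. -/
noncomputable def linForm {k : Type*} [CommRing k] {N : ℕ} (lam : Fin N → k) :
    MvPolynomial (Fin N) k :=
  ∑ v : Fin N, C (lam v) * X v

namespace Stmt1Aux

variable {k : Type*} [CommRing k] {N : ℕ}

/-- multiplicity of `l` in the tuple `j`. -/
def wt {N q : ℕ} (j : Fin q → Fin N) (l : Fin N) : ℕ :=
  ∑ t, if j t = l then 1 else 0

/-- the element of `(ZMod p)^N` attached to `l`. -/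
def sg (p : ℕ) {N : ℕ} (l : Fin N) : Fin N → ZMod p :=
  fun l' => if l = l' then 1 else 0

/-- multiplicities of the tuple `j`, as an element of `(ZMod p)^N`. -/
def wtc (p : ℕ) {N q : ℕ} (j : Fin q → Fin N) : Fin N → ZMod p :=
  fun l => (wt j l : ZMod p)

/-- graded component of a polynomial for the `(ZMod p)^N`-grading by exponents mod `p`. -/
noncomputable def pc (p : ℕ) {N : ℕ} {k : Type*} [CommRing k] (γ : Fin N → ZMod p)
    (f : MvPolynomial (Fin N) k) : MvPolynomial (Fin N) k :=
  weightedHomogeneousComponent (fun l : Fin N => Pi.single l (1 : ZMod p)) γ f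

lemma weight_apply' (p : ℕ) (d : Fin N →₀ ℕ) (l : Fin N) :
    Finsupp.weight (fun l : Fin N => Pi.single l (1 : ZMod p)) d l = (d l : ZMod p) := by
  classical
  rw [Finsupp.weight_apply, Finsupp.sum, Finset.sum_apply]
  have : ∀ i : Fin N, (d i • (Pi.single i (1 : ZMod p) : Fin N → ZMod p)) l
      = if l = i then (d i : ZMod p) else 0 := by
    intro i
    rw [Pi.smul_apply, Pi.single_apply]
    split_ifs with h1 h2 h2 <;> simp_all
  rw [Finset.sum_congr rfl fun i _ => this i, Finset.sum_ite_eq]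
  split_ifs with h
  · rfl
  · rw [Finsupp.notMem_support_iff.mp h, Nat.cast_zero]

lemma coeff_pc (p : ℕ) (γ : Fin N → ZMod p) (f : MvPolynomial (Fin N) k) (d : Fin N →₀ ℕ) :
    coeff d (pc p γ f) = if ∀ l, (d l : ZMod p) = γ l then coeff d f else 0 := by
  classical
  rw [pc, coeff_weightedHomogeneousComponent]
  refine if_congr ?_ rfl rfl
  rw [funext_iff]
  exact forall_congr' fun l => by rw [weight_apply']

lemma pc_add (p : ℕ) (γ : Fin N → ZMod p) (f g : MvPolynomial (Fin N) k) :
    pc p γ (f + g) = pc p γ f + pc p γ g := map_add _ _ _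

lemma pc_zero (p : ℕ) (γ : Fin N → ZMod p) :
    pc p γ (0 : MvPolynomial (Fin N) k) = 0 := map_zero _

lemma pc_zsmul (p : ℕ) (γ : Fin N → ZMod p) (z : ℤ) (f : MvPolynomial (Fin N) k) :
    pc p γ (z • f) = z • pc p γ f := map_zsmul (weightedHomogeneousComponent _ γ) z f

lemma pc_C_mul (p : ℕ) (γ : Fin N → ZMod p) (a : k) (f : MvPolynomial (Fin N) k) :
    pc p γ (C a * f) = C a * pc p γ f := by
  apply MvPolynomial.ext
  intro d
  simp [coeff_pc, coeff_C_mul, mul_ite]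

lemma coeff_pderiv (l : Fin N) (f : MvPolynomial (Fin N) k) (d : Fin N →₀ ℕ) :
    coeff d (pderiv l f) = ((d l + 1 : ℕ) : k) * coeff (d + Finsupp.single l 1) f := by
  classical
  induction f using MvPolynomial.induction_on' with
  | add f g hf hg => simp [hf, hg, mul_add]
  | monomial u a =>
    rw [pderiv_monomial, coeff_monomial, coeff_monomial]
    by_cases h : u = d + Finsupp.single l 1
    · have h1 : u - Finsupp.single l 1 = d := by
        subst h; ext l'; simp [Finsupp.single_apply]
      have h2 : u l = d l + 1 := by subst h; simp [Finsupp.single_apply]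
      rw [if_pos h, if_pos h1, h2]
      push_cast; ring
    · rw [if_neg h, mul_zero]
      by_cases h1 : u - Finsupp.single l 1 = d
      · rw [if_pos h1]
        by_cases h2 : u l = 0
        · simp [h2]
        · exfalso; apply h
          ext l'
          have h3 := DFunLike.congr_fun h1 l'
          rw [Finsupp.tsub_apply, Finsupp.single_apply] at h3
          rw [Finsupp.add_apply, Finsupp.single_apply]
          by_cases hl : l = l'
          · subst hl
            rw [if_pos rfl] at h3 ⊢
            omega
          · rw [if_neg hl] at h3 ⊢
            omega
      · rw [if_neg h1]

lemma coeff_X_mul'' (l : Fin N) (f : MvPolynomial (Fin N) k) (d : Fin N →₀ ℕ) :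
    coeff d (X l * f) = if d l = 0 then 0 else coeff (d - Finsupp.single l 1) f := by
  classical
  rw [coeff_X_mul']
  by_cases h : d l = 0
  · rw [if_neg (fun hc => (Finsupp.mem_support_iff.mp hc) h), if_pos h]
  · rw [if_pos (Finsupp.mem_support_iff.mpr h), if_neg h]

lemma coeff_X_mul_pderiv (l : Fin N) (f : MvPolynomial (Fin N) k) (d : Fin N →₀ ℕ) :
    coeff d (X l * pderiv l f) = ((d l : ℕ) : k) * coeff d f := by
  classical
  rw [coeff_X_mul'']
  by_cases h : d l = 0
  · simp [h]
  · rw [if_neg h, coeff_pderiv]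
    have h1 : (d - Finsupp.single l 1 : Fin N →₀ ℕ) l + 1 = d l := by
      rw [Finsupp.tsub_apply, Finsupp.single_apply, if_pos rfl]; omega
    have h2 : d - Finsupp.single l 1 + Finsupp.single l 1 = d := by
      ext l'
      rw [Finsupp.add_apply, Finsupp.tsub_apply, Finsupp.single_apply]
      by_cases hl : l = l'
      · subst hl; rw [if_pos rfl]; omega
      · rw [if_neg hl]; omega
    rw [h1, h2]

lemma pderiv_pc (p : ℕ) (γ : Fin N → ZMod p) (l : Fin N) (f : MvPolynomial (Fin N) k) :
    pderiv l (pc p γ f) = pc p (γ - sg p l) (pderiv l f) := by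
  classical
  apply MvPolynomial.ext
  intro d
  rw [coeff_pderiv, coeff_pc, coeff_pc, coeff_pderiv]
  have hiff : (∀ l', (((d + Finsupp.single l 1 : Fin N →₀ ℕ) l' : ℕ) : ZMod p) = γ l')
      ↔ (∀ l', (d l' : ZMod p) = (γ - sg p l) l') := by
    refine forall_congr' fun l' => ?_
    rw [Finsupp.add_apply, Finsupp.single_apply, Pi.sub_apply]
    show _ ↔ _ = γ l' - sg p l l'
    rw [sg]
    by_cases hl : l = l'
    · subst hl
      simp only [if_pos rfl]
      push_cast
      rw [eq_sub_iff_add_eq]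
    · simp only [if_neg hl]
      push_cast
      rw [sub_zero, add_zero]
  rw [if_congr hiff rfl rfl, mul_ite, mul_zero]

lemma X_mul_pc (p : ℕ) (γ : Fin N → ZMod p) (l : Fin N) (f : MvPolynomial (Fin N) k) :
    X l * pc p γ f = pc p (γ + sg p l) (X l * f) := by
  classical
  apply MvPolynomial.ext
  intro d
  rw [coeff_X_mul'', coeff_pc, coeff_pc, coeff_X_mul'']
  by_cases h : d l = 0
  · simp [h]
  · rw [if_neg h, if_neg h]
    have hiff : (∀ l', (((d - Finsupp.single l 1 : Fin N →₀ ℕ) l' : ℕ) : ZMod p) = γ l')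
        ↔ (∀ l', (d l' : ZMod p) = (γ + sg p l) l') := by
      refine forall_congr' fun l' => ?_
      rw [Finsupp.tsub_apply, Finsupp.single_apply, Pi.add_apply]
      show _ ↔ _ = γ l' + sg p l l'
      rw [sg]
      by_cases hl : l = l'
      · subst hl
        rw [if_pos rfl, if_pos rfl]
        have hd : d l - 1 + 1 = d l := by omega
        have key : (d l : ZMod p) = ((d l - 1 : ℕ) : ZMod p) + 1 := by
          have h5 := Nat.cast_add (R := ZMod p) (d l - 1) 1
          rw [hd] at h5
          rw [h5, Nat.cast_one]
        rw [key]
        exact (add_left_inj 1).symm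
      · simp [hl]
    rw [if_congr hiff rfl rfl]

lemma pc_sum (p : ℕ) [NeZero p] (δ : Fin N → ZMod p) (f : MvPolynomial (Fin N) k) :
    ∑ β : Fin N → ZMod p, pc p (β - δ) f = f := by
  classical
  apply MvPolynomial.ext
  intro d
  rw [coeff_sum]
  simp only [coeff_pc]
  have hcond : ∀ β : Fin N → ZMod p,
      (∀ l, (d l : ZMod p) = (β - δ) l) ↔ β = (fun l => (d l : ZMod p) + δ l) := by
    intro β
    rw [funext_iff]
    refine forall_congr' fun l => ?_
    rw [Pi.sub_apply, eq_sub_iff_add_eq, eq_comm]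
  rw [Finset.sum_congr rfl fun β _ => if_congr (hcond β) rfl rfl,
    Finset.sum_ite_eq' Finset.univ]
  simp

lemma pc_key (p : ℕ) [CharP k p] (γ : Fin N → ZMod p) (a : ℕ) (l : Fin N)
    (f : MvPolynomial (Fin N) k) :
    pc p γ (C ((a : ℕ) : k) * f + X l * pderiv l f)
      = C ((ZMod.castHom (dvd_refl p) k) (γ l + (a : ZMod p))) * pc p γ f := by
  classical
  apply MvPolynomial.ext
  intro d
  rw [coeff_C_mul, coeff_pc, coeff_pc, coeff_add, coeff_C_mul, coeff_X_mul_pderiv]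
  by_cases h : ∀ l', (d l' : ZMod p) = γ l'
  · rw [if_pos h, if_pos h]
    have : γ l + (a : ZMod p) = (((d l + a : ℕ) : ZMod p)) := by
      rw [← h l]; push_cast; ring
    rw [this, map_natCast]
    push_cast; ring
  · rw [if_neg h, if_neg h, mul_zero]

lemma wt_cons {q : ℕ} (l : Fin N) (i : Fin q → Fin N) (l' : Fin N) :
    wt (Fin.cons l i) l' = (if l = l' then 1 else 0) + wt i l' := by
  rw [wt, Fin.sum_univ_succ, Fin.cons_zero]
  simp [wt, Fin.cons_succ]

lemma wtc_cons {q : ℕ} (p : ℕ) (l : Fin N) (i : Fin q → Fin N) :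
    wtc p (Fin.cons l i) = sg p l + wtc p i := by
  funext l'
  rw [Pi.add_apply, wtc, wt_cons, Nat.cast_add, sg, wtc]
  congr 1
  split_ifs <;> simp

lemma wt_succAbove {q : ℕ} (j : Fin (q + 1) → Fin N) (t : Fin (q + 1)) (l' : Fin N) :
    wt j l' = (if j t = l' then 1 else 0) + wt (j ∘ t.succAbove) l' := by
  rw [wt, Fin.sum_univ_succAbove _ t]
  rfl

lemma wtc_succAbove {q : ℕ} (p : ℕ) (j : Fin (q + 1) → Fin N) (t : Fin (q + 1)) :
    wtc p j = sg p (j t) + wtc p (j ∘ t.succAbove) := by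
  funext l'
  rw [Pi.add_apply, wtc, wt_succAbove j t, Nat.cast_add, sg, wtc]
  congr 1
  split_ifs <;> simp

lemma wt_comp_perm {q : ℕ} (j : Fin q → Fin N) (σ : Equiv.Perm (Fin q)) (l' : Fin N) :
    wt (j ∘ σ) l' = wt j l' :=
  Equiv.sum_comp σ (fun t => if j t = l' then 1 else 0)

lemma cons_comp_succAbove {q : ℕ} (l : Fin N) (j : Fin (q + 1) → Fin N) (t : Fin (q + 1)) :
    (Fin.cons l j : Fin (q + 2) → Fin N) ∘ (t.succ).succAbove
      = Fin.cons l (j ∘ t.succAbove) := by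
  funext s
  cases s using Fin.cases with
  | zero => simp [Fin.succ_succAbove_zero]
  | succ u => simp [Fin.succ_succAbove_succ]

/-- Transferred form of closedness. -/
lemma closed_cons {m : ℕ} (b : (Fin (m + 1) → Fin N) → MvPolynomial (Fin N) k)
    (hclosed : ∀ j : Fin (m + 1 + 1) → Fin N, extD b j = 0) (l : Fin N)
    (j : Fin (m + 1) → Fin N) :
    ∑ t : Fin (m + 1), (-1 : MvPolynomial (Fin N) k) ^ (t : ℕ)
        * pderiv (j t) (b (Fin.cons l (j ∘ t.succAbove)))
      = pderiv l (b j) := by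
  have h := hclosed (Fin.cons l j)
  rw [extD, Fin.sum_univ_succ] at h
  have h0 : (Fin.cons l j : Fin (m + 2) → Fin N) ∘ (0 : Fin (m + 2)).succAbove = j := by
    funext s
    simp [Fin.succAbove_zero]
  rw [h0] at h
  simp only [Fin.cons_zero, Fin.cons_succ, Fin.val_zero, pow_zero, one_mul, Fin.val_succ,
    pow_succ, cons_comp_succAbove] at h
  have hrw : ∀ t : Fin (m + 1),
      (-1 : MvPolynomial (Fin N) k) ^ (t : ℕ) * -1
          * pderiv (j t) (b (Fin.cons l (j ∘ t.succAbove)))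
        = -((-1 : MvPolynomial (Fin N) k) ^ (t : ℕ)
          * pderiv (j t) (b (Fin.cons l (j ∘ t.succAbove)))) := by
    intro t; ring
  rw [Finset.sum_congr rfl fun t _ => hrw t, Finset.sum_neg_distrib] at h
  linear_combination -h

/-- Transferred form of the alternating property. -/
lemma alt_cons {m : ℕ} (b : (Fin (m + 1) → Fin N) → MvPolynomial (Fin N) k)
    (halt : IsAltFamily b) (j : Fin (m + 1) → Fin N) (t : Fin (m + 1)) :
    b (Fin.cons (j t) (j ∘ t.succAbove))
      = (-1 : MvPolynomial (Fin N) k) ^ (t : ℕ) * b j := by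
  have hc : Fin.cons (j t) (j ∘ t.succAbove) = j ∘ (t.cycleRange.symm : Equiv.Perm (Fin (m+1))) := by
    funext s
    cases s using Fin.cases with
    | zero => simp [Fin.cycleRange_symm_zero]
    | succ u => simp [Fin.cycleRange_symm_succ]
  rw [hc, halt.1]
  rw [Equiv.Perm.sign_symm, Fin.sign_cycleRange]
  have : (((-1 : ℤˣ) ^ (t : ℕ) : ℤˣ) : ℤ) = (-1 : ℤ) ^ (t : ℕ) := by push_cast; ring
  rw [this, zsmul_eq_mul]
  push_cast
  ring

/-- the sum of the ε-signed multiplicity terms. -/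
lemma sum_ite_eq_wt_mul {m : ℕ} (b : (Fin (m + 1) → Fin N) → MvPolynomial (Fin N) k)
    (halt : IsAltFamily b) (j : Fin (m + 1) → Fin N) (l : Fin N) :
    ∑ t : Fin (m + 1), (-1 : MvPolynomial (Fin N) k) ^ (t : ℕ)
        * ((if l = j t then (1 : MvPolynomial (Fin N) k) else 0)
          * b (Fin.cons l (j ∘ t.succAbove)))
      = C ((wt j l : ℕ) : k) * b j := by
  have hterm : ∀ t : Fin (m + 1),
      (-1 : MvPolynomial (Fin N) k) ^ (t : ℕ)
          * ((if l = j t then (1 : MvPolynomial (Fin N) k) else 0)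
            * b (Fin.cons l (j ∘ t.succAbove)))
        = if j t = l then b j else 0 := by
    intro t
    by_cases h : l = j t
    · subst h
      rw [if_pos rfl, if_pos rfl, one_mul, alt_cons b halt j t]
      rw [← mul_assoc, ← mul_pow]
      simp
    · rw [if_neg h, if_neg (fun hc => h hc.symm), zero_mul, mul_zero]
  rw [Finset.sum_congr rfl fun t _ => hterm t]
  rw [Finset.sum_ite, Finset.sum_const, Finset.sum_const_zero, add_zero]
  rw [wt]
  have : (∑ t : Fin (m + 1), if j t = l then (1:ℕ) else 0)
      = (Finset.univ.filter fun t : Fin (m+1) => j t = l).card := by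
    rw [Finset.sum_ite, Finset.sum_const, Finset.sum_const_zero, add_zero, smul_eq_mul, mul_one]
  rw [this, nsmul_eq_mul, C_eq_coe_nat]

lemma pc_neg_pow_mul (p : ℕ) (γ : Fin N → ZMod p) (s : ℕ) (f : MvPolynomial (Fin N) k) :
    (-1 : MvPolynomial (Fin N) k) ^ s * pc p γ f = pc p γ ((-1) ^ s * f) := by
  have hC : (-1 : MvPolynomial (Fin N) k) ^ s = C ((-1 : k) ^ s) := by
    rw [map_pow, map_neg, map_one]
  rw [hC, pc_C_mul]

lemma pc_fsum (p : ℕ) (γ : Fin N → ZMod p) {ι : Type*} (s : Finset ι)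
    (f : ι → MvPolynomial (Fin N) k) :
    ∑ t ∈ s, pc p γ (f t) = pc p γ (∑ t ∈ s, f t) :=
  (map_sum (weightedHomogeneousComponent (fun l : Fin N => Pi.single l (1 : ZMod p)) γ) f s).symm

lemma extD_sum {q : ℕ} {ι : Type*} (s : Finset ι)
    (g : ι → (Fin q → Fin N) → MvPolynomial (Fin N) k) (j : Fin (q + 1) → Fin N) :
    extD (fun i => ∑ β ∈ s, g β i) j = ∑ β ∈ s, extD (g β) j := by
  rw [extD]
  have hterm : ∀ t : Fin (q + 1), (-1 : MvPolynomial (Fin N) k) ^ (t : ℕ)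
        * pderiv (j t) (∑ β ∈ s, g β (j ∘ t.succAbove))
      = ∑ β ∈ s, (-1 : MvPolynomial (Fin N) k) ^ (t : ℕ)
        * pderiv (j t) (g β (j ∘ t.succAbove)) := by
    intro t
    rw [map_sum, Finset.mul_sum]
  rw [Finset.sum_congr rfl fun t _ => hterm t, Finset.sum_comm]
  exact Finset.sum_congr rfl fun β _ => rfl

lemma extD_C_mul {q : ℕ} (a : k) (g : (Fin q → Fin N) → MvPolynomial (Fin N) k)
    (j : Fin (q + 1) → Fin N) :
    extD (fun i => C a * g i) j = C a * extD g j := by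
  rw [extD, extD, Finset.mul_sum]
  refine Finset.sum_congr rfl fun t _ => ?_
  rw [pderiv_C_mul]
  ring

/-- The fundamental homotopy computation. -/
lemma homotopy {m : ℕ} (p : ℕ) [CharP k p]
    (b : (Fin (m + 1) → Fin N) → MvPolynomial (Fin N) k)
    (halt : IsAltFamily b)
    (hclosed : ∀ j : Fin (m + 1 + 1) → Fin N, extD b j = 0)
    (β : Fin N → ZMod p) (l : Fin N) (j : Fin (m + 1) → Fin N) :
    extD (fun i => X l * pc p (β - wtc p (Fin.cons l i)) (b (Fin.cons l i))) j
      = C ((ZMod.castHom (dvd_refl p) k) (β l)) * pc p (β - wtc p j) (b j) := by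
  rw [extD]
  have step1 : ∀ t : Fin (m + 1),
      (-1 : MvPolynomial (Fin N) k) ^ (t : ℕ) * pderiv (j t)
        (X l * pc p (β - wtc p (Fin.cons l (j ∘ t.succAbove))) (b (Fin.cons l (j ∘ t.succAbove))))
      = pc p (β - wtc p j)
          ((-1) ^ (t : ℕ) * pderiv (j t) (X l * b (Fin.cons l (j ∘ t.succAbove)))) := by
    intro t
    have e1 : X l * pc p (β - wtc p (Fin.cons l (j ∘ t.succAbove))) (b (Fin.cons l (j ∘ t.succAbove)))
        = pc p (β - wtc p (j ∘ t.succAbove)) (X l * b (Fin.cons l (j ∘ t.succAbove))) := by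
      rw [X_mul_pc]
      congr 1
      rw [wtc_cons]
      abel
    have e2 : β - wtc p (j ∘ t.succAbove) - sg p (j t) = β - wtc p j := by
      rw [wtc_succAbove p j t]
      abel
    rw [e1, pderiv_pc, e2, pc_neg_pow_mul]
  rw [Finset.sum_congr rfl fun t _ => step1 t, pc_fsum]
  have inner : ∑ t : Fin (m + 1), (-1 : MvPolynomial (Fin N) k) ^ (t : ℕ)
        * pderiv (j t) (X l * b (Fin.cons l (j ∘ t.succAbove)))
      = C ((wt j l : ℕ) : k) * b j + X l * pderiv l (b j) := by
    have hterm : ∀ t : Fin (m + 1),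
        (-1 : MvPolynomial (Fin N) k) ^ (t : ℕ)
            * pderiv (j t) (X l * b (Fin.cons l (j ∘ t.succAbove)))
          = (-1) ^ (t : ℕ) * ((if l = j t then (1 : MvPolynomial (Fin N) k) else 0)
              * b (Fin.cons l (j ∘ t.succAbove)))
            + (-1) ^ (t : ℕ) * (X l * pderiv (j t) (b (Fin.cons l (j ∘ t.succAbove)))) := by
      intro t
      rw [pderiv_mul]
      have hX : pderiv (j t) (X l : MvPolynomial (Fin N) k) = if l = j t then 1 else 0 := by
        split_ifs with h
        · rw [h, pderiv_X_self]
        · exact pderiv_X_of_ne h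
      rw [hX]
      ring
    rw [Finset.sum_congr rfl fun t _ => hterm t, Finset.sum_add_distrib,
      sum_ite_eq_wt_mul b halt j l]
    congr 1
    calc ∑ t : Fin (m + 1), (-1 : MvPolynomial (Fin N) k) ^ (t : ℕ)
          * (X l * pderiv (j t) (b (Fin.cons l (j ∘ t.succAbove))))
        = X l * ∑ t : Fin (m + 1), (-1 : MvPolynomial (Fin N) k) ^ (t : ℕ)
          * pderiv (j t) (b (Fin.cons l (j ∘ t.succAbove))) := by
          rw [Finset.mul_sum]
          exact Finset.sum_congr rfl fun t _ => by ring
      _ = X l * pderiv l (b j) := by rw [closed_cons b hclosed l j]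
  rw [inner, pc_key]
  have harg : (β - wtc p j) l + ((wt j l : ℕ) : ZMod p) = β l := by
    simp only [Pi.sub_apply, wtc]
    abel
  rw [harg]

lemma pc_isHomogeneous (p : ℕ) (γ : Fin N → ZMod p) (f : MvPolynomial (Fin N) k) {n : ℕ}
    (hf : f.IsHomogeneous n) : (pc p γ f).IsHomogeneous n := by
  intro d hd
  rw [coeff_pc] at hd
  by_cases h : ∀ l, (d l : ZMod p) = γ l
  · rw [if_pos h] at hd
    exact hf hd
  · rw [if_neg h] at hd
    exact absurd rfl hd

noncomputable def piv {p N : ℕ} [NeZero N] (β : Fin N → ZMod p) : Fin N :=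
  if h : ∃ l, β l ≠ 0 then h.choose else ⟨0, Nat.pos_of_ne_zero (NeZero.ne N)⟩

lemma piv_spec {p N : ℕ} [NeZero N] {β : Fin N → ZMod p} (hβ : β ≠ 0) : β (piv β) ≠ 0 := by
  have h : ∃ l, β l ≠ 0 := by
    by_contra hc
    push_neg at hc
    exact hβ (funext fun l => hc l)
  rw [piv, dif_pos h]
  exact h.choose_spec

/-- Forcing lemma: a weight-zero monomial of an injective slot is the extremal one. -/
lemma lemA {m e : ℕ} (p : ℕ) [NeZero p] (he : m + 1 ≤ e) (he' : e ≤ (m + 1) * p)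
    (f : MvPolynomial (Fin N) k) (hhom : f.IsHomogeneous (e - (m + 1)))
    (j : Fin (m + 1) → Fin N) (hj : Function.Injective j)
    (d : Fin N →₀ ℕ) (hd : coeff d f ≠ 0)
    (hw : ∀ l, (d l : ZMod p) + (wt j l : ZMod p) = 0) :
    ∀ l, d l = if l ∈ Finset.image j Finset.univ then p - 1 else 0 := by
  classical
  have hp0 : p ≠ 0 := NeZero.ne p
  have hsum : ∑ l, d l = e - (m + 1) := by
    have h1 := hhom hd
    rw [Finsupp.weight_apply] at h1
    rw [← h1, Finsupp.sum_fintype]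
    · exact Finset.sum_congr rfl fun l _ => by simp
    · intro l; simp
  set S := Finset.image j Finset.univ with hSdef
  have hcard : S.card = m + 1 := by
    rw [hSdef, Finset.card_image_of_injective _ hj, Finset.card_univ, Fintype.card_fin]
  have hwt1 : ∀ l ∈ S, wt j l = 1 := by
    intro l hl
    obtain ⟨t, _, ht⟩ := Finset.mem_image.mp hl
    rw [wt]
    have : ∀ t' : Fin (m + 1), (if j t' = l then (1:ℕ) else 0) = if t' = t then 1 else 0 := by
      intro t'
      rw [← ht]
      by_cases h : t' = t
      · rw [if_pos h, if_pos (by rw [h])]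
      · rw [if_neg h, if_neg (fun hc => h (hj hc))]
    rw [Finset.sum_congr rfl fun t' _ => this t', Finset.sum_ite_eq' Finset.univ]
    simp
  have hwt0 : ∀ l ∉ S, wt j l = 0 := by
    intro l hl
    rw [wt]
    refine Finset.sum_eq_zero fun t _ => ?_
    rw [if_neg]
    intro hc
    exact hl (Finset.mem_image.mpr ⟨t, Finset.mem_univ t, hc⟩)
  have hin : ∀ l ∈ S, p - 1 ≤ d l := by
    intro l hl
    have h1 := hw l
    rw [hwt1 l hl] at h1
    have h2 : ((d l + 1 : ℕ) : ZMod p) = 0 := by push_cast; exact_mod_cast h1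
    have h3 : p ∣ d l + 1 := (ZMod.natCast_eq_zero_iff _ _).mp h2
    have h4 : p ≤ d l + 1 := Nat.le_of_dvd (by omega) h3
    omega
  have hout : ∀ l ∉ S, p ∣ d l := by
    intro l hl
    have h1 := hw l
    rw [hwt0 l hl] at h1
    rw [Nat.cast_zero, add_zero] at h1
    exact (ZMod.natCast_eq_zero_iff _ _).mp h1
  have hmul : (m + 1) * (p - 1) + (m + 1) = (m + 1) * p := by
    have h1 : p - 1 + 1 = p := by omega
    calc (m + 1) * (p - 1) + (m + 1) = (m + 1) * ((p - 1) + 1) := by ring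
      _ = (m + 1) * p := by rw [h1]
  have h3 : e - (m + 1) ≤ (m + 1) * (p - 1) := Nat.sub_le_of_le_add (hmul ▸ he')
  have h1 : (m + 1) * (p - 1) ≤ ∑ l ∈ S, d l := by
    calc (m + 1) * (p - 1) = S.card * (p - 1) := by rw [hcard]
      _ = ∑ _l ∈ S, (p - 1) := by rw [Finset.sum_const, smul_eq_mul]
      _ ≤ ∑ l ∈ S, d l := Finset.sum_le_sum hin
  have h2 : ∑ l ∈ S, d l ≤ ∑ l, d l := Finset.sum_le_sum_of_subset (Finset.subset_univ S)
  have eS : ∑ l ∈ S, d l = (m + 1) * (p - 1) := by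
    refine le_antisymm ?_ h1
    calc ∑ l ∈ S, d l ≤ ∑ l, d l := h2
      _ = e - (m + 1) := hsum
      _ ≤ (m + 1) * (p - 1) := h3
  have eU : ∑ l, d l = (m + 1) * (p - 1) := by
    refine le_antisymm (hsum ▸ h3) ?_
    exact le_trans h1 h2
  have hcompl : ∀ l ∉ S, d l = 0 := by
    have hsd : ∑ l ∈ Finset.univ \ S, d l + ∑ l ∈ S, d l = ∑ l, d l :=
      Finset.sum_sdiff (Finset.subset_univ S)
    rw [eS, eU] at hsd
    have hzero : ∑ l ∈ Finset.univ \ S, d l = 0 := by omega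
    intro l hl
    exact (Finset.sum_eq_zero_iff.mp hzero) l (Finset.mem_sdiff.mpr ⟨Finset.mem_univ l, hl⟩)
  intro l
  by_cases hl : l ∈ S
  · rw [if_pos hl]
    by_contra hne
    have hlt : p - 1 < d l := lt_of_le_of_ne (hin l hl) (fun hc => hne hc.symm)
    have : ∑ _l ∈ S, (p - 1) < ∑ l ∈ S, d l :=
      Finset.sum_lt_sum hin ⟨l, hl, hlt⟩
    rw [Finset.sum_const, smul_eq_mul, hcard, eS] at this
    omega
  · rw [if_neg hl]
    exact hcompl l hl

/-- The weight-zero component of a projective closed form of small degree vanishes. -/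
lemma lemB {m e : ℕ} (p : ℕ) [NeZero p]
    (he : m + 1 ≤ e) (he' : e ≤ (m + 1) * p)
    (b : (Fin (m + 1) → Fin N) → MvPolynomial (Fin N) k)
    (halt : IsAltFamily b)
    (hhom : ∀ i, (b i).IsHomogeneous (e - (m + 1)))
    (hproj : IsProjectiveForm b)
    (j : Fin (m + 1) → Fin N) (d : Fin N →₀ ℕ)
    (hw : ∀ l, (d l : ZMod p) + (wt j l : ZMod p) = 0) :
    coeff d (b j) = 0 := by
  classical
  by_contra hd
  by_cases hj : Function.Injective j
  swap
  · rw [halt.2 j hj, coeff_zero] at hd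
    exact hd rfl
  have hdl := lemA p he he' (b j) (hhom j) j hj d hd hw
  have hcontr := hproj (Fin.tail j)
  have hcoeff := congrArg (coeff (d + Finsupp.single (j 0) 1)) hcontr
  rw [coeff_sum, coeff_zero] at hcoeff
  have hterm : ∀ l : Fin N,
      coeff (d + Finsupp.single (j 0) 1) (X l * b (Fin.cons l (Fin.tail j)))
        = if l = j 0 then coeff d (b j) else 0 := by
    intro l
    rw [coeff_X_mul'']
    by_cases hl : l = j 0
    · subst hl
      rw [if_pos rfl]
      have hne : (d + Finsupp.single (j 0) 1 : Fin N →₀ ℕ) (j 0) ≠ 0 := by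
        rw [Finsupp.add_apply, Finsupp.single_apply, if_pos rfl]
        omega
      rw [if_neg hne]
      have hsub : d + Finsupp.single (j 0) 1 - Finsupp.single (j 0) 1 = d := by
        ext l'
        rw [Finsupp.tsub_apply, Finsupp.add_apply]
        omega
      rw [hsub, Fin.cons_self_tail]
    · rw [if_neg hl]
      by_cases hr : l ∈ Finset.image j Finset.univ
      · -- l occurs in j at a successor position: the slot degenerates
        obtain ⟨t, _, ht⟩ := Finset.mem_image.mp hr
        have ht0 : t ≠ 0 := fun hc => hl (by rw [← ht, hc])
        obtain ⟨u, hu⟩ : ∃ u : Fin m, t = u.succ := ⟨t.pred ht0, (Fin.succ_pred t ht0).symm⟩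
        have hninj : ¬ Function.Injective (Fin.cons l (Fin.tail j) : Fin (m+1) → Fin N) := by
          intro hinj
          have h1 : (Fin.cons l (Fin.tail j) : Fin (m+1) → Fin N) 0 = l := rfl
          have h2 : (Fin.cons l (Fin.tail j) : Fin (m+1) → Fin N) u.succ = l := by
            rw [Fin.cons_succ, Fin.tail, ← hu, ht]
          have := hinj (h1.trans h2.symm)
          exact (Fin.succ_ne_zero u) this.symm
        rw [halt.2 _ hninj, coeff_zero, ite_self]
      · -- l does not occur in j at all: the exponent of x_l is zero
        have hd0 : d l = 0 := by rw [hdl l, if_neg hr]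
        have : (d + Finsupp.single (j 0) 1 : Fin N →₀ ℕ) l = 0 := by
          rw [Finsupp.add_apply, Finsupp.single_apply, if_neg (fun hc => hl hc.symm), hd0]
          rfl
        rw [if_pos this]
  rw [Finset.sum_congr rfl fun l _ => hterm l, Finset.sum_ite_eq' Finset.univ] at hcoeff
  rw [if_pos (Finset.mem_univ _)] at hcoeff
  exact hd hcoeff

end Stmt1Aux

open Stmt1Aux in
set_option maxHeartbeats 2000000 in
/-- Over an algebraically closed field of characteristic `p > 0`, a projective
closed homogeneous polynomial `q`-form of degree `e` (here `q = m + 1`, `1 ≤ q ≤ n`,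
`q ≤ e ≤ q·p`) on affine `(n+1)`-space is exact. -/
theorem stmt_1 {k : Type*} [Field k] [IsAlgClosed k] (p : ℕ) [CharP k p] (hp : 0 < p)
    (n m e : ℕ) (hn : 1 ≤ n) (hq : m + 1 ≤ n) (he : m + 1 ≤ e) (he' : e ≤ (m + 1) * p)
    (b : (Fin (m + 1) → Fin (n + 1)) → MvPolynomial (Fin (n + 1)) k)
    (halt : IsAltFamily b)
    (hhom : ∀ i, (b i).IsHomogeneous (e - (m + 1)))
    (hproj : IsProjectiveForm b)
    (hclosed : ∀ j : Fin (m + 1 + 1) → Fin (n + 1), extD b j = 0) :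
    ∃ c : (Fin m → Fin (n + 1)) → MvPolynomial (Fin (n + 1)) k,
      IsAltFamily c ∧ (∀ i, (c i).IsHomogeneous (e - (m + 1) + 1)) ∧
      ∀ j : Fin (m + 1) → Fin (n + 1), extD c j = b j := by
  classical
  haveI : NeZero p := ⟨hp.ne'⟩
  haveI hFp : Fact p.Prime := CharP.char_is_prime_of_pos k p
  set φ := ZMod.castHom (dvd_refl p) k with hφdef
  set S : Finset (Fin (n + 1) → ZMod p) := Finset.univ.filter (fun β => β ≠ 0) with hS
  refine ⟨fun i => ∑ β ∈ S, C (φ ((β (piv β))⁻¹))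
      * (X (piv β) * pc p (β - wtc p (Fin.cons (piv β) i)) (b (Fin.cons (piv β) i))),
    ⟨?_, ?_⟩, ?_, ?_⟩
  · -- antisymmetry
    intro σ i
    simp only []
    rw [Finset.smul_sum]
    refine Finset.sum_congr rfl fun β _ => ?_
    set l := piv β with hl
    have hperm : Fin.cons l (i ∘ σ) = (Fin.cons l i) ∘ (Equiv.Perm.decomposeFin.symm (0, σ)) := by
      funext s
      cases s using Fin.cases with
      | zero => simp [Equiv.Perm.decomposeFin_symm_apply_zero]
      | succ u => simp [Equiv.Perm.decomposeFin_symm_apply_succ, Equiv.swap_self]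
    have hsign : ((Equiv.Perm.sign (Equiv.Perm.decomposeFin.symm (0, σ)) : ℤˣ) : ℤ)
        = ((Equiv.Perm.sign σ : ℤˣ) : ℤ) := by
      rw [Equiv.Perm.decomposeFin.symm_sign, if_pos rfl, one_mul]
    have hwtc : wtc p ((Fin.cons l i) ∘ (Equiv.Perm.decomposeFin.symm (0, σ)))
        = wtc p (Fin.cons l i) :=
      funext fun l' => congrArg Nat.cast (wt_comp_perm _ _ l')
    rw [hperm, halt.1 (Equiv.Perm.decomposeFin.symm (0, σ)) (Fin.cons l i), hwtc, hsign,
      pc_zsmul, mul_smul_comm, mul_smul_comm]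
  · -- vanishing on non-injective tuples
    intro i hi
    simp only []
    refine Finset.sum_eq_zero fun β _ => ?_
    have hninj : ¬ Function.Injective (Fin.cons (piv β) i : Fin (m + 1) → Fin (n + 1)) := by
      intro hinj
      apply hi
      intro a b hab
      have : (Fin.cons (piv β) i : Fin (m+1) → Fin (n+1)) a.succ
          = (Fin.cons (piv β) i : Fin (m+1) → Fin (n+1)) b.succ := by
        rw [Fin.cons_succ, Fin.cons_succ]; exact hab
      exact Fin.succ_injective _ (hinj this)
    rw [halt.2 _ hninj, pc_zero, mul_zero, mul_zero]
  · -- homogeneity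
    intro i
    apply IsHomogeneous.sum
    intro β _
    have h1 : (pc p (β - wtc p (Fin.cons (piv β) i)) (b (Fin.cons (piv β) i))).IsHomogeneous
        (e - (m + 1)) := pc_isHomogeneous _ _ _ (hhom _)
    have h2 := (isHomogeneous_X k (piv β)).mul h1
    have h3 := h2.C_mul (φ ((β (piv β))⁻¹))
    have hdeg : e - (m + 1) + 1 = 1 + (e - (m + 1)) := by omega
    rw [hdeg]
    exact h3
  · -- exterior derivative recovers b
    intro j
    rw [extD_sum]
    have hstep : ∀ β ∈ S,
        extD (fun i => C (φ ((β (piv β))⁻¹))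
          * (X (piv β) * pc p (β - wtc p (Fin.cons (piv β) i)) (b (Fin.cons (piv β) i)))) j
        = pc p (β - wtc p j) (b j) := by
      intro β hβS
      have hβ : β ≠ 0 := (Finset.mem_filter.mp hβS).2
      rw [extD_C_mul, homotopy p b halt hclosed β (piv β) j, ← mul_assoc, ← C_mul,
        ← map_mul, inv_mul_cancel₀ (piv_spec hβ), map_one, map_one, one_mul]
    rw [Finset.sum_congr rfl hstep]
    have h0 : pc p ((0 : Fin (n + 1) → ZMod p) - wtc p j) (b j) = 0 := by
      apply MvPolynomial.ext
      intro d
      rw [coeff_pc, coeff_zero]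
      by_cases hcond : ∀ l, (d l : ZMod p) = ((0 : Fin (n+1) → ZMod p) - wtc p j) l
      · rw [if_pos hcond]
        refine lemB p he he' b halt hhom hproj j d fun l => ?_
        have := hcond l
        rw [Pi.sub_apply, Pi.zero_apply, zero_sub] at this
        rw [this]
        simp [wtc]
      · rw [if_neg hcond]
    have hS' : S = Finset.univ.erase (0 : Fin (n + 1) → ZMod p) := by
      rw [hS, Finset.filter_ne']
    rw [hS']
    have hsplit : pc p ((0 : Fin (n + 1) → ZMod p) - wtc p j) (b j)
        + ∑ β ∈ Finset.univ.erase (0 : Fin (n + 1) → ZMod p), pc p (β - wtc p j) (b j)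
        = ∑ β : Fin (n + 1) → ZMod p, pc p (β - wtc p j) (b j) :=
      Finset.add_sum_erase _ _ (Finset.mem_univ _)
    rw [h0, zero_add] at hsplit
    rw [hsplit, pc_sum]
end

section
/- (Degree zero foliations in characteristic two.) Let k be an algebraically closed field of characteristic 2 and let n ≥ 1. Let ω = Σ_i a_i dx_i be a homogeneous polynomial 1-form of degree 2 on affine (n+1)-space over k (each a_i homogeneous of degree 1) which is projective, i.e. Σ_i x_i·a_i = 0. Then there exists a homogeneous polynomial f ∈ k[x_0,…,x_n] of degree 2 with a_i = ∂f/∂x_i for all i; in particular ω is closed (and hence integrable). -/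
open MvPolynomial

lemma degree_one_exists {σ : Type*} (m : σ →₀ ℕ) (h : m.degree = 1) :
    ∃ j, m = Finsupp.single j 1 := by
  classical
  have hne : m.support.Nonempty := by
    rw [Finset.nonempty_iff_ne_empty]
    intro he
    have h' : ∑ i ∈ m.support, m i = 1 := h
    simp [he] at h'
  have hcard : m.support.card ≤ 1 := by
    have h1 : m.support.card • 1 ≤ ∑ i ∈ m.support, m i :=
      Finset.card_nsmul_le_sum m.support m 1
        (fun i hi => Nat.one_le_iff_ne_zero.mpr (Finsupp.mem_support_iff.mp hi))
    simpa [Finsupp.degree] using h1.trans_eq h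
  have : m.support.card = 1 := le_antisymm hcard (Finset.card_pos.mpr hne)
  obtain ⟨j, hj⟩ := Finset.card_eq_one.mp this
  obtain ⟨-, hm⟩ := Finsupp.support_eq_singleton.mp hj
  have hmj : m j = 1 := by
    have : ∑ i ∈ m.support, m i = 1 := h
    rw [hj, Finset.sum_singleton] at this
    exact this
  exact ⟨j, by rw [hm, hmj]⟩

/-- Degree zero foliations in characteristic two. Over an algebraically
closed field of characteristic `2`, every projective homogeneous polynomial `1`-form of
degree `2` on affine `(n+1)`-space is exact: `ω = df` with `f` homogeneous quadratic;
in particular `ω` is closed (and hence integrable). -/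
theorem stmt_6 {k : Type*} [Field k] [IsAlgClosed k] [CharP k 2]
    (n : ℕ) (hn : 1 ≤ n)
    (a : Fin (n + 1) → MvPolynomial (Fin (n + 1)) k)
    (hhom : ∀ i, (a i).IsHomogeneous 1)
    (hproj : ∑ i : Fin (n + 1), X i * a i = 0) :
    ∃ f : MvPolynomial (Fin (n + 1)) k, f.IsHomogeneous 2 ∧
      (∀ i, a i = pderiv i f) ∧
      ∀ i j, pderiv j (a i) = pderiv i (a j) := by
  classical
  set c : Fin (n + 1) → Fin (n + 1) → k :=
    fun i j => coeff (Finsupp.single j 1) (a i) with hc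
  -- decomposition of each `a i` as a linear form
  have hdec : ∀ i, a i = ∑ j, C (c i j) * X j := by
    intro i
    ext m
    rw [coeff_sum]
    by_cases hm : m.degree = 1
    · obtain ⟨l, rfl⟩ := degree_one_exists m hm
      rw [Finset.sum_eq_single l]
      · simp [coeff_C_mul, coeff_X', hc]
      · intro b _ hb
        have : Finsupp.single b 1 ≠ Finsupp.single l 1 := by
          simp [Finsupp.single_left_inj (one_ne_zero (α := ℕ)), hb]
        simp [coeff_C_mul, coeff_X', this]
      · simp
    · rw [(hhom i).coeff_eq_zero hm]
      refine (Finset.sum_eq_zero ?_).symm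
      intro l _
      have : Finsupp.single l 1 ≠ m := by
        intro e
        apply hm
        rw [← e]
        show ∑ i ∈ _, _ = 1
        simp [Finsupp.degree, Finsupp.support_single_ne_zero]
      simp [coeff_C_mul, coeff_X', this]
  -- diagonal coefficients vanish
  have hdiag : ∀ i, c i i = 0 := by
    intro i
    have h0 : coeff (Finsupp.single i 2) (∑ p, X p * a p) = 0 := by
      rw [hproj]; simp
    rw [coeff_sum, Finset.sum_eq_single i] at h0
    · rw [coeff_X_mul'] at h0
      have hmem : i ∈ (Finsupp.single i 2).support := by simp
      rw [if_pos hmem] at h0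
      have hsub : Finsupp.single i 2 - Finsupp.single i 1 = Finsupp.single i 1 := by
        ext t
        simp [Finsupp.single_apply]
        split <;> simp
      rwa [hsub] at h0
    · intro b _ hb
      rw [coeff_X_mul']
      have : b ∉ (Finsupp.single i 2).support := by
        simp [Finsupp.support_single_ne_zero, hb]
      simp [this, hb]
    · simp
  -- symmetry of coefficients
  have hsym : ∀ i j, c i j = c j i := by
    intro i j
    rcases eq_or_ne i j with rfl | hij
    · rfl
    have h0 : coeff (Finsupp.single i 1 + Finsupp.single j 1) (∑ p, X p * a p) = 0 := by
      rw [hproj]; simp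
    rw [coeff_sum] at h0
    have hzero : ∀ p ∈ (Finset.univ : Finset (Fin (n + 1))), p ∉ ({i, j} : Finset (Fin (n + 1))) →
        coeff (Finsupp.single i 1 + Finsupp.single j 1) (X p * a p) = 0 := by
      intro p _ hp
      simp only [Finset.mem_insert, Finset.mem_singleton, not_or] at hp
      rw [coeff_X_mul']
      have : p ∉ (Finsupp.single i 1 + Finsupp.single j 1).support := by
        simp [Finsupp.single_apply, Ne.symm hp.1, Ne.symm hp.2]
      simp [this]
    rw [← Finset.sum_subset (Finset.subset_univ ({i, j} : Finset (Fin (n + 1)))) hzero] at h0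
    rw [Finset.sum_pair hij] at h0
    rw [coeff_X_mul', coeff_X_mul'] at h0
    have hi : i ∈ (Finsupp.single i 1 + Finsupp.single j 1).support := by
      simp [Finsupp.single_apply]
    have hjm : j ∈ (Finsupp.single i 1 + Finsupp.single j 1).support := by
      simp [Finsupp.single_apply, hij.symm]
    rw [if_pos hi, if_pos hjm, add_tsub_cancel_left] at h0
    have hsub2 : Finsupp.single i 1 + Finsupp.single j 1 - Finsupp.single j 1
        = Finsupp.single i 1 := add_tsub_cancel_right _ _
    rw [hsub2] at h0
    -- h0 : coeff (single j 1) (a i) + coeff (single i 1) (a j) = 0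
    have : c i j = - c j i := eq_neg_of_add_eq_zero_left h0
    rwa [CharTwo.neg_eq] at this
  -- the potential
  set t : Fin (n + 1) → MvPolynomial (Fin (n + 1)) k :=
    fun i => ∑ j ∈ Finset.univ.filter (fun j => i < j), C (c i j) * X j with ht
  set f : MvPolynomial (Fin (n + 1)) k := ∑ i, X i * t i with hf
  have hfhom : f.IsHomogeneous 2 := by
    rw [hf]
    apply IsHomogeneous.sum
    intro i _
    rw [ht, Finset.mul_sum]
    apply IsHomogeneous.sum
    intro j _
    have := (isHomogeneous_X k i).mul ((isHomogeneous_C _ (c i j)).mul (isHomogeneous_X k j))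
    simpa [mul_left_comm] using this
  have hpdt : ∀ r i, pderiv r (t i) = if i < r then C (c i r) else 0 := by
    intro r i
    rw [ht]
    simp only [map_sum]
    have : ∀ j, pderiv r (C (c i j) * X j : MvPolynomial (Fin (n + 1)) k)
        = if j = r then C (c i j) else 0 := by
      intro j
      rcases eq_or_ne j r with rfl | hj
      · simp [pderiv_mul]
      · simp [pderiv_mul, pderiv_X_of_ne hj, hj]
    rw [Finset.sum_congr rfl (fun j _ => this j), Finset.sum_ite_eq']
    simp
  have hpdf : ∀ r, pderiv r f = t r + ∑ i ∈ Finset.univ.filter (fun i => i < r),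
      C (c i r) * X i := by
    intro r
    rw [hf, map_sum]
    have hterm : ∀ i, pderiv r (X i * t i)
        = (if i = r then t r else 0) + (if i < r then C (c i r) * X i else 0) := by
      intro i
      rw [pderiv_mul, hpdt]
      rcases eq_or_ne i r with rfl | hi
      · simp
      · rcases lt_or_ge i r with h | h
        · simp [pderiv_X_of_ne hi, hi, h, mul_comm]
        · simp [pderiv_X_of_ne hi, hi, not_lt.mpr h]
    rw [Finset.sum_congr rfl (fun i _ => hterm i), Finset.sum_add_distrib,
      Finset.sum_ite_eq', ← Finset.sum_filter]
    simp
  refine ⟨f, hfhom, ?_, ?_⟩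
  · intro r
    rw [hpdf, hdec r]
    have hsplit := Finset.sum_filter_add_sum_filter_not (Finset.univ : Finset (Fin (n + 1)))
      (fun j => r < j) (fun j => C (c r j) * X j)
    rw [← hsplit, ht]
    congr 1
    have hset : Finset.univ.filter (fun j => ¬ r < j)
        = insert r (Finset.univ.filter (fun j => j < r)) := by
      ext x
      simp only [Finset.mem_filter, Finset.mem_univ, true_and, Finset.mem_insert, not_lt]
      constructor
      · intro h
        rcases lt_or_eq_of_le h with h' | h'
        · exact Or.inr h'
        · exact Or.inl h'
      · rintro (rfl | h)
        · exact le_refl _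
        · exact le_of_lt h
    rw [hset, Finset.sum_insert (by simp)]
    rw [hdiag r]
    simp only [map_zero, zero_mul, zero_add]
    exact Finset.sum_congr rfl (fun j _ => by rw [hsym r j])
  · intro i j
    have key : ∀ p q, pderiv q (a p) = C (c p q) := by
      intro p q
      rw [hdec p, map_sum]
      have : ∀ l, pderiv q (C (c p l) * X l : MvPolynomial (Fin (n + 1)) k)
          = if l = q then C (c p l) else 0 := by
        intro l
        rcases eq_or_ne l q with rfl | hl
        · simp [pderiv_mul]
        · simp [pderiv_mul, pderiv_X_of_ne hl, hl]
      rw [Finset.sum_congr rfl (fun l _ => this l), Finset.sum_ite_eq']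
      simp
    rw [key i j, key j i, hsym i j]
end

section
/- Let k be an algebraically closed field of characteristic p > 0, let n ≥ 1 and e ≥ 1 be integers with p·e ≥ 3, and let F = Σ_{i=1}^{n} x_{i−1}·x_i^{pe−1} ∈ k[x_0,…,x_n]. Then for a point x = (x_0,…,x_n) ∈ k^{n+1}, all the partial derivatives ∂F/∂x_j (j = 0,…,n) vanish at x if and only if x_1 = x_2 = … = x_n = 0. In other words, the zero locus of the differential dF is exactly the line {x_1 = … = x_n = 0} through the origin of affine (n+1)-space. -/
open MvPolynomial

lemma aux_term {k : Type*} [CommRing k] {σ : Type*} [DecidableEq σ] (x : σ → k)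
    (j a b : σ) (m : ℕ) :
    eval x (pderiv j (X a * X b ^ m : MvPolynomial σ k)) =
      (if a = j then (x b) ^ m else 0) +
        (if b = j then (m : k) * x a * (x b) ^ (m - 1) else 0) := by
  rw [pderiv_mul, pderiv_pow, pderiv_X, pderiv_X]
  by_cases ha : a = j <;> by_cases hb : b = j <;>
    simp [ha, hb, Pi.single_apply, mul_comm, mul_assoc, mul_left_comm]


/-- For `F = Σ_{i=1}^{n} x_{i-1}·x_i^{pe-1}` over an algebraically closed
field of characteristic `p > 0` with `p·e ≥ 3`, all partial derivatives of `F` vanish at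
a point `x ∈ k^{n+1}` if and only if `x_1 = ⋯ = x_n = 0`: the zero locus of `dF` is
precisely the line `{x_1 = ⋯ = x_n = 0}` through the origin. -/
theorem stmt_8 {k : Type*} [Field k] [IsAlgClosed k] (p : ℕ) [CharP k p] (hp : 0 < p)
    (n e : ℕ) (hn : 1 ≤ n) (he : 1 ≤ e) (hpe : 3 ≤ p * e)
    (x : Fin (n + 1) → k) :
    (∀ j : Fin (n + 1),
        eval x (pderiv j
          (∑ i : Fin n, X i.castSucc * X i.succ ^ (p * e - 1) :
            MvPolynomial (Fin (n + 1)) k)) = 0) ↔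
      ∀ i : Fin (n + 1), i ≠ 0 → x i = 0 := by
  set m : ℕ := p * e - 1 with hm
  have hm2 : 2 ≤ m := by omega
  have key : ∀ j : Fin (n + 1),
      eval x (pderiv j
        (∑ i : Fin n, X i.castSucc * X i.succ ^ m : MvPolynomial (Fin (n + 1)) k)) =
      ∑ i : Fin n, ((if i.castSucc = j then (x i.succ) ^ m else 0) +
        (if i.succ = j then (m : k) * x i.castSucc * (x i.succ) ^ (m - 1) else 0)) := by
    intro j
    rw [map_sum, map_sum]
    exact Finset.sum_congr rfl fun i _ => aux_term x j i.castSucc i.succ m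
  constructor
  · intro h
    -- prove by strong induction on t : x ⟨t+1⟩ = 0 for t < n
    have main : ∀ t : ℕ, ∀ ht : t < n, x ⟨t + 1, by omega⟩ = 0 := by
      intro t
      induction t using Nat.strong_induction_on with
      | _ t IH =>
        intro ht
        have hj := h ⟨t, by omega⟩
        rw [key] at hj
        rw [Finset.sum_add_distrib] at hj
        have h1 : (∑ i : Fin n, if i.castSucc = (⟨t, by omega⟩ : Fin (n+1))
            then (x i.succ) ^ m else 0) = (x ⟨t + 1, by omega⟩) ^ m := by
          rw [Finset.sum_eq_single (⟨t, ht⟩ : Fin n)]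
          · rw [if_pos]
            · congr 1
            · ext; simp
          · intro i _ hi
            rw [if_neg]
            intro hc
            apply hi
            ext
            simpa [Fin.ext_iff] using hc
          · simp
        have h2 : (∑ i : Fin n, if i.succ = (⟨t, by omega⟩ : Fin (n+1))
            then (m : k) * x i.castSucc * (x i.succ) ^ (m - 1) else 0) = 0 := by
          apply Finset.sum_eq_zero
          intro i _
          by_cases hc : i.succ = (⟨t, by omega⟩ : Fin (n+1))
          · have hiv : (i : ℕ) + 1 = t := by
              have := congrArg Fin.val hc
              simpa using this
            have hxz : x i.succ = 0 := by
              have h0 := IH i (by omega) (by omega)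
              have he2 : i.succ = (⟨(i : ℕ) + 1, by omega⟩ : Fin (n+1)) :=
                Fin.ext (by simp)
              rw [he2]; exact h0
            rw [if_pos hc, hxz, zero_pow (by omega), mul_zero]
          · rw [if_neg hc]
        rw [h1, h2, add_zero] at hj
        exact pow_eq_zero_iff (by omega) |>.mp hj
    intro i hi
    have hiv : 1 ≤ (i : ℕ) := by
      rcases Nat.pos_of_ne_zero (n := (i : ℕ)) (fun hc => hi (Fin.ext (by simpa using hc))) with h'
      exact h'
    have h0 := main ((i : ℕ) - 1) (by omega)
    have he2 : i = (⟨(i : ℕ) - 1 + 1, by omega⟩ : Fin (n+1)) :=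
      Fin.ext (by simp; omega)
    rw [he2]; exact h0
  · intro h j
    rw [key]
    apply Finset.sum_eq_zero
    intro i _
    have hx1 : x i.succ = 0 := h i.succ (Fin.succ_ne_zero i)
    rw [hx1, zero_pow (by omega), zero_pow (by omega), mul_zero]
    simp
end

section
/- Let k be an algebraically closed field of characteristic p > 0, let n ≥ 3, and let a, b ∈ k[x_0,…,x_n] be relatively prime polynomials (every common divisor of a and b is a unit). Suppose that b·∂a/∂x_i = a·∂b/∂x_i for every i with 3 ≤ i ≤ n. Then ∂a/∂x_i = 0 and ∂b/∂x_i = 0 for all 3 ≤ i ≤ n, and consequently both a and b belong to the k-subalgebra of k[x_0,…,x_n] generated by x_0, x_1, x_2 and the p-th powers x_i^p for 3 ≤ i ≤ n. -/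
open MvPolynomial

/-- The `k`-subalgebra of `k[x_0, …, x_n]` generated by `x_0, x_1, x_2` and the `p`-th
powers `x_i^p` for `3 ≤ i ≤ n`. -/
noncomputable def xAlg (k : Type*) [CommRing k] (n p : ℕ) :
    Subalgebra k (MvPolynomial (Fin (n + 1)) k) :=
  Algebra.adjoin k
    {P | (∃ i : Fin (n + 1), (i : ℕ) < 3 ∧ P = X i) ∨
         (∃ i : Fin (n + 1), 3 ≤ (i : ℕ) ∧ P = X i ^ p)}

/-- The coefficient of a partial derivative. -/
theorem coeff_pderiv' {σ R : Type*} [CommRing R] [DecidableEq σ] (i : σ) (f : MvPolynomial σ R)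
    (m : σ →₀ ℕ) :
    coeff m (pderiv i f) = (m i + 1 : ℕ) * coeff (m + Finsupp.single i 1) f := by
  induction f using MvPolynomial.induction_on' with
  | monomial d c =>
    rw [pderiv_monomial, coeff_monomial, coeff_monomial]
    rcases Nat.eq_zero_or_pos (d i) with h0 | h1
    · have hne : ¬ d = m + Finsupp.single i 1 := by
        rintro rfl; simp at h0
      rw [if_neg hne, mul_zero, h0]
      split_ifs <;> simp
    · have hle : Finsupp.single i 1 ≤ d := Finsupp.single_le_iff.mpr h1
      simp only [tsub_eq_iff_eq_add_of_le hle]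
      by_cases hd : d = m + Finsupp.single i 1
      · rw [if_pos hd, if_pos hd]
        have : d i = m i + 1 := by simp [hd]
        rw [this]; push_cast; ring
      · rw [if_neg hd, if_neg hd, mul_zero]
  | add p q hp hq => simp [hp, hq, mul_add]

lemma zero_le_lex {σ : Type*} [LinearOrder σ] (x : Lex (σ →₀ ℕ)) : 0 ≤ x := by
  by_contra hx
  rw [not_le] at hx
  obtain ⟨i, -, hi⟩ := Finsupp.Lex.lt_iff.mp hx
  exact Nat.not_lt_zero _ hi

open AddMonoidAlgebra in
/-- If a polynomial divides its own partial derivative, the derivative vanishes. -/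
theorem pderiv_eq_zero_of_self_dvd {σ R : Type*} [LinearOrder σ] [WellFoundedGT σ]
    [CommRing R] [IsDomain R] (i : σ) (f : MvPolynomial σ R)
    (hdvd : f ∣ pderiv i f) : pderiv i f = 0 := by
  classical
  by_contra hne
  have hf : f ≠ 0 := by rintro rfl; exact hne (zero_dvd_iff.mp hdvd)
  obtain ⟨c, hc⟩ := hdvd
  have hcne : c ≠ 0 := by rintro rfl; simp at hc; exact hne hc
  have hlt : ∀ m ∈ (pderiv i f).support, toLex m < f.supDegree toLex := by
    intro m hm
    have h1 : MvPolynomial.coeff (m + Finsupp.single i 1) f ≠ 0 := by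
      intro h0
      rw [MvPolynomial.mem_support_iff, coeff_pderiv', h0, mul_zero] at hm
      exact hm rfl
    have h2 : (m + Finsupp.single i 1) ∈ f.support := MvPolynomial.mem_support_iff.mpr h1
    have h3 : toLex (m + Finsupp.single i 1) ≤ f.supDegree toLex := Finset.le_sup h2
    refine lt_of_lt_of_le ?_ h3
    apply (Finsupp.toLex_monotone.strictMono_of_injective toLex.injective)
    refine lt_of_le_of_ne le_self_add ?_
    intro hmm
    have := congrFun (congrArg (fun g : σ →₀ ℕ => (g : σ → ℕ)) hmm) i
    simp at this
  have hbot : (⊥ : Lex (σ →₀ ℕ)) < f.supDegree toLex := by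
    obtain ⟨m, hm⟩ := (MvPolynomial.support_nonempty.mpr hne)
    exact lt_of_le_of_lt bot_le (hlt m hm)
  have hsuplt : (pderiv i f).supDegree toLex < f.supDegree toLex := by
    rw [supDegree, Finset.sup_lt_iff hbot]
    exact hlt
  have heq : (pderiv i f).supDegree toLex = f.supDegree toLex + c.supDegree toLex := by
    rw [hc]
    apply supDegree_mul toLex.injective (fun a b => rfl) ?_ hf hcne
    exact mul_ne_zero ((leadingCoeff_ne_zero toLex.injective).mpr hf)
      ((leadingCoeff_ne_zero toLex.injective).mpr hcne)
  rw [heq] at hsuplt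
  have : f.supDegree toLex ≤ f.supDegree toLex + c.supDegree toLex := by
    nth_rewrite 1 [← add_zero (f.supDegree toLex)]
    exact add_le_add_right (zero_le_lex _) _
  exact absurd (lt_of_le_of_lt this hsuplt) (lt_irrefl _)

lemma X_mem_xAlg {k : Type*} [CommRing k] {n p : ℕ} {i : Fin (n + 1)} (h : (i : ℕ) < 3) :
    X i ∈ xAlg k n p :=
  Algebra.subset_adjoin (Or.inl ⟨i, h, rfl⟩)

lemma X_pow_mem_xAlg {k : Type*} [CommRing k] {n p : ℕ} {i : Fin (n + 1)} (h : 3 ≤ (i : ℕ)) :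
    X i ^ p ∈ xAlg k n p :=
  Algebra.subset_adjoin (Or.inr ⟨i, h, rfl⟩)

lemma mem_xAlg_of_pderiv_eq_zero {k : Type*} [Field k] (p : ℕ) [CharP k p]
    {n : ℕ} (f : MvPolynomial (Fin (n + 1)) k)
    (hf : ∀ i : Fin (n + 1), 3 ≤ (i : ℕ) → pderiv i f = 0) :
    f ∈ xAlg k n p := by
  rw [← support_sum_monomial_coeff f]
  apply Subalgebra.sum_mem
  intro d hd
  rw [monomial_eq]
  apply Subalgebra.mul_mem
  · exact Subalgebra.algebraMap_mem _ _
  · rw [Finsupp.prod]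
    apply Subalgebra.prod_mem
    intro j hj
    show X j ^ d j ∈ xAlg k n p
    rcases lt_or_ge ((j : ℕ)) 3 with h3 | h3
    · exact Subalgebra.pow_mem _ (X_mem_xAlg h3) _
    · have hpd : p ∣ d j := by
        rcases Nat.eq_zero_or_pos (d j) with h0 | h1
        · simp [h0]
        · have hle : Finsupp.single j 1 ≤ d := Finsupp.single_le_iff.mpr h1
          have hkey := coeff_pderiv' j f (d - Finsupp.single j 1)
          rw [hf j h3, tsub_add_cancel_of_le hle] at hkey
          have hmj : ((d - Finsupp.single j 1 : Fin (n + 1) →₀ ℕ)) j + 1 = d j := by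
            rw [Finsupp.tsub_apply, Finsupp.single_apply, if_pos rfl]
            omega
          rw [hmj, coeff_zero] at hkey
          have hcd : coeff d f ≠ 0 := MvPolynomial.mem_support_iff.mp hd
          have : ((d j : ℕ) : k) = 0 := by
            rcases mul_eq_zero.mp hkey.symm with h | h
            · exact h
            · exact absurd h hcd
          exact (CharP.cast_eq_zero_iff k p _).mp this
      obtain ⟨e, he⟩ := hpd
      rw [he, pow_mul]
      exact Subalgebra.pow_mem _ (X_pow_mem_xAlg h3) _

/-- Over an algebraically closed field of characteristic `p > 0`, if `a` and
`b` are relatively prime polynomials in `k[x_0, …, x_n]` (`n ≥ 3`) satisfying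
`b·∂a/∂x_i = a·∂b/∂x_i` for all `3 ≤ i ≤ n`, then `∂a/∂x_i = ∂b/∂x_i = 0` for all
`3 ≤ i ≤ n`, and `a, b` lie in the subalgebra generated by `x_0, x_1, x_2` and the `p`-th
powers `x_i^p`, `3 ≤ i ≤ n`. -/
theorem stmt_9 {k : Type*} [Field k] [IsAlgClosed k] (p : ℕ) [CharP k p] (hp : 0 < p)
    (n : ℕ) (hn : 3 ≤ n)
    (a b : MvPolynomial (Fin (n + 1)) k)
    (hcop : IsRelPrime a b)
    (h : ∀ i : Fin (n + 1), 3 ≤ (i : ℕ) → b * pderiv i a = a * pderiv i b) :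
    (∀ i : Fin (n + 1), 3 ≤ (i : ℕ) → pderiv i a = 0 ∧ pderiv i b = 0) ∧
    a ∈ xAlg k n p ∧ b ∈ xAlg k n p := by
  have key : ∀ i : Fin (n + 1), 3 ≤ (i : ℕ) → pderiv i a = 0 ∧ pderiv i b = 0 := by
    intro i hi
    constructor
    · apply pderiv_eq_zero_of_self_dvd
      apply hcop.dvd_of_dvd_mul_left
      rw [h i hi]
      exact dvd_mul_right _ _
    · apply pderiv_eq_zero_of_self_dvd
      apply hcop.symm.dvd_of_dvd_mul_left
      rw [← h i hi]
      exact dvd_mul_right _ _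
  exact ⟨key, mem_xAlg_of_pderiv_eq_zero p a (fun i hi => (key i hi).1),
    mem_xAlg_of_pderiv_eq_zero p b (fun i hi => (key i hi).2)⟩
end
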